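/- Let P be a finite point set in a metric space and let P' be a Δ-translation of P (same cardinality n). Let e_1 ≤ ... ≤ e_{n−1} be the MST edge weights of P in sorted order and e'_1 ≤ ... ≤ e'_{n−1} those of P'. Then |e_i − e'_i| ≤ 2Δ for every i. -/

import Mathlib

/-- Adjacency at threshold `r`: two points of `P` at distance at most `r`. -/
def connRel {X : Type*} [MetricSpace X] (P : Set X) (r : ℝ) (a b : X) : Prop :=
  a ∈ P ∧ b ∈ P ∧ dist a b ≤ r

/-- The connected component of `p` in the `r`-connectivity graph on `P`. -/
def component {X : Type*} [MetricSpace X] (P : Set X) (r : ℝ) (p : X) : Set X :=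
  {q ∈ P | Relation.ReflTransGen (connRel P r) p q}

/-- The number of connected components of the `r`-connectivity clustering `CC(P, r)`. -/
noncomputable def numCC {X : Type*} [MetricSpace X] (P : Set X) (r : ℝ) : ℕ :=
  ((component P r) '' P).ncard

/-- The `i`-th smallest MST edge weight of `P` (for `1 ≤ i ≤ |P| - 1`), characterized as the
minimum `r ≥ 0` such that `CC(P, r)` has at most `|P| - i` connected components. -/
noncomputable def mstEdge {X : Type*} [MetricSpace X] (P : Set X) (i : ℕ) : ℝ :=
  sInf {r : ℝ | 0 ≤ r ∧ numCC P r ≤ P.ncard - i}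

lemma connRel_symm {X : Type*} [MetricSpace X] (P : Set X) (r : ℝ) :
    Symmetric (connRel P r) := fun a b ⟨ha, hb, hd⟩ => ⟨hb, ha, by rwa [dist_comm]⟩

lemma component_eq_of_rtg {X : Type*} [MetricSpace X] (P : Set X) (r : ℝ) {p p' : X}
    (h : Relation.ReflTransGen (connRel P r) p p') :
    component P r p = component P r p' := by
  ext q
  constructor
  · rintro ⟨hq, hr⟩
    exact ⟨hq, ((@Relation.ReflTransGen.symmetric _ _ ⟨connRel_symm P r⟩).symm _ _ h).trans hr⟩
  · rintro ⟨hq, hr⟩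
    exact ⟨hq, h.trans hr⟩

lemma key {X : Type*} [MetricSpace X] (P Q : Set X) (hP : P.Finite)
    (r Δ : ℝ) (hΔ : 0 ≤ Δ)
    (f : X → X) (hbij : Set.BijOn f P Q) (hmove : ∀ p ∈ P, dist p (f p) ≤ Δ) :
    numCC Q (r + 2 * Δ) ≤ numCC P r := by
  classical
  -- transfer of paths
  have step : ∀ a b, connRel P r a b → connRel Q (r + 2 * Δ) (f a) (f b) := by
    rintro a b ⟨ha, hb, hd⟩
    refine ⟨hbij.mapsTo ha, hbij.mapsTo hb, ?_⟩
    have h1 := hmove a ha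
    have h2 := hmove b hb
    have := dist_triangle4 (f a) a b (f b)
    rw [dist_comm (f a) a] at this
    linarith
  have trans : ∀ a b, Relation.ReflTransGen (connRel P r) a b →
      Relation.ReflTransGen (connRel Q (r + 2 * Δ)) (f a) (f b) := by
    intro a b h
    induction h with
    | refl => exact Relation.ReflTransGen.refl
    | tail _ hcb ih => exact ih.tail (step _ _ hcb)
  -- rewrite image over Q as image over P
  have himg : (component Q (r + 2 * Δ)) '' Q =
      (fun p => component Q (r + 2 * Δ) (f p)) '' P := by
    rw [← hbij.image_eq, Set.image_image]
  rw [numCC, numCC, himg]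
  -- now a surjection argument
  by_cases hne : P.Nonempty
  · have : Nonempty X := ⟨hne.choose⟩
    set g₁ : X → Set X := component P r
    set g₂ : X → Set X := fun p => component Q (r + 2 * Δ) (f p)
    have hcompat : ∀ a ∈ P, ∀ b ∈ P, g₁ a = g₁ b → g₂ a = g₂ b := by
      intro a ha b hb h
      have hb' : b ∈ g₁ a := h ▸ ⟨hb, Relation.ReflTransGen.refl⟩
      exact component_eq_of_rtg _ _ (trans a b hb'.2)
    set F : Set X → Set X := fun C => g₂ (Function.invFunOn g₁ P C)
    have hsub : g₂ '' P ⊆ F '' (g₁ '' P) := by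
      rintro _ ⟨b, hb, rfl⟩
      refine ⟨g₁ b, ⟨b, hb, rfl⟩, ?_⟩
      have hex : ∃ a ∈ P, g₁ a = g₁ b := ⟨b, hb, rfl⟩
      exact hcompat _ (Function.invFunOn_mem hex) _ hb (Function.invFunOn_eq hex)
    calc (g₂ '' P).ncard ≤ (F '' (g₁ '' P)).ncard :=
          Set.ncard_le_ncard hsub ((hP.image g₁).image F)
      _ ≤ (g₁ '' P).ncard := Set.ncard_image_le (hP.image g₁)
  · rw [Set.not_nonempty_iff_eq_empty] at hne
    simp [hne]


/-- If `Q` is a `Δ`-translation of `P` (same cardinality `n`), then the `i`-th (sorted) MST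
edge weights of `P` and `Q` differ by at most `2Δ` for every `i`. -/
theorem stmt16 {X : Type*} [MetricSpace X] (P Q : Set X) (hP : P.Finite) (hQ : Q.Finite)
    (n : ℕ) (hn2 : 2 ≤ n) (hPn : P.ncard = n) (hQn : Q.ncard = n)
    (Δ : ℝ) (hΔ : 0 ≤ Δ)
    (f : X → X) (hbij : Set.BijOn f P Q) (hmove : ∀ p ∈ P, dist p (f p) ≤ Δ) :
    ∀ i, 1 ≤ i → i ≤ n - 1 → |mstEdge P i - mstEdge Q i| ≤ 2 * Δ := by
  classical
  intro i hi1 hi2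
  -- inverse map
  have hPne : P.Nonempty := Set.nonempty_of_ncard_ne_zero (by omega)
  have hQne : Q.Nonempty := Set.nonempty_of_ncard_ne_zero (by omega)
  have : Nonempty X := ⟨hPne.choose⟩
  set g := Function.invFunOn f P with hg
  have hinv := hbij.invOn_invFunOn
  have hgbij : Set.BijOn g Q P := Set.BijOn.symm hinv.symm hbij
  have hgmove : ∀ q ∈ Q, dist q (g q) ≤ Δ := by
    intro q hq
    have h1 : g q ∈ P := hgbij.mapsTo hq
    have h2 : f (g q) = q := hinv.2 hq
    have := hmove (g q) h1
    rw [h2, dist_comm] at this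
    exact this
  -- a generic one-sided bound
  have onesided : ∀ (A B : Set X) (hA : A.Finite) (hB : B.Finite)
      (hAn : A.ncard = n) (hBn : B.ncard = n) (φ : X → X)
      (hφ : Set.BijOn φ A B) (hφm : ∀ p ∈ A, dist p (φ p) ≤ Δ),
      mstEdge B i ≤ mstEdge A i + 2 * Δ := by
    intro A B hA hB hAn hBn φ hφ hφm
    have hAne : A.Nonempty := Set.nonempty_of_ncard_ne_zero (by omega)
    set SA := {r : ℝ | 0 ≤ r ∧ numCC A r ≤ A.ncard - i} with hSA
    set SB := {r : ℝ | 0 ≤ r ∧ numCC B r ≤ B.ncard - i} with hSB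
    -- SA nonempty
    obtain ⟨C, hC⟩ := Metric.isBounded_iff.mp hA.isBounded
    have hC0 : 0 ≤ C := by
      have := hC hAne.choose_spec hAne.choose_spec
      simpa using this
    have hSAne : SA.Nonempty := by
      refine ⟨C, hC0, ?_⟩
      have hcomp : ∀ p ∈ A, component A C p = A := by
        intro p hp
        ext q
        constructor
        · exact fun h => h.1
        · intro hq
          exact ⟨hq, Relation.ReflTransGen.single ⟨hp, hq, hC hp hq⟩⟩
      have : (component A C) '' A = {A} := by
        apply Set.eq_singleton_iff_nonempty_unique_mem.mpr
        constructor
        · exact ⟨A, hAne.choose, hAne.choose_spec, hcomp _ hAne.choose_spec⟩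
        · rintro _ ⟨p, hp, rfl⟩; exact hcomp p hp
      rw [numCC, this, Set.ncard_singleton, hAn]
      omega
    have hbddB : BddBelow SB := ⟨0, fun r hr => hr.1⟩
    have hmemB : ∀ r ∈ SA, r + 2 * Δ ∈ SB := by
      rintro r ⟨hr0, hrA⟩
      refine ⟨by linarith, ?_⟩
      calc numCC B (r + 2 * Δ) ≤ numCC A r := key A B hA r Δ hΔ φ hφ hφm
        _ ≤ A.ncard - i := hrA
        _ = B.ncard - i := by rw [hAn, hBn]
    have : sInf SB - 2 * Δ ≤ sInf SA := by
      apply le_csInf hSAne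
      intro r hr
      have := csInf_le hbddB (hmemB r hr)
      linarith
    simpa [mstEdge, hSA, hSB] using by linarith
  have h1 := onesided P Q hP hQ hPn hQn f hbij hmove
  have h2 := onesided Q P hQ hP hQn hPn g hgbij hgmove
  rw [abs_sub_le_iff]
  constructor <;> linarith
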